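/- For any two graphs G and H with γ(H) ≥ 2, a set D ⊆ V(G) × V(H) is a minimal dominating set of G[H] if and only if: (i) p_G(D) is an irreducible dominating set of G; and (ii) for every x ∈ p_G(D), if x is totally dominated by p_G(D) then |p_{H,x}(D)| = 1, and if x is barely dominated by p_G(D) then p_{H,x}(D) is a minimal dominating set of H. -/

import Mathlib

open SimpleGraph Finset

/-- Open neighborhood of a set: vertices having a neighbor in `S`. -/
def nbhd {V : Type*} (G : SimpleGraph V) (S : Set V) : Set V := {v | ∃ u ∈ S, G.Adj u v}

/-- Closed neighborhood of a vertex. -/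
def closedNbhd {V : Type*} (G : SimpleGraph V) (v : V) : Set V := insert v (G.neighborSet v)

/-- `S` dominates vertex `v`. -/
def Dominates {V : Type*} (G : SimpleGraph V) (S : Set V) (v : V) : Prop :=
  v ∈ S ∨ ∃ u ∈ S, G.Adj u v

/-- `D` is a dominating set of `G`. -/
def IsDomSet {V : Type*} (G : SimpleGraph V) (D : Set V) : Prop := ∀ v, Dominates G D v

/-- `D` is a minimal dominating set of `G`. -/
def IsMinDomSet {V : Type*} (G : SimpleGraph V) (D : Set V) : Prop :=
  IsDomSet G D ∧ ∀ D' ⊂ D, ¬ IsDomSet G D'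

/-- `D` is an irreducible dominating set of `G`. -/
def IsIrredDomSet {V : Type*} (G : SimpleGraph V) (D : Set V) : Prop :=
  IsDomSet G D ∧ ¬ ∃ u ∈ D, IsDomSet G (D \ {u}) ∧ nbhd G D = nbhd G (D \ {u})

/-- Lexicographic product of two simple graphs. -/
def lexProd {V W : Type*} (G : SimpleGraph V) (H : SimpleGraph W) : SimpleGraph (V × W) where
  Adj p q := G.Adj p.1 q.1 ∨ (p.1 = q.1 ∧ H.Adj p.2 q.2)
  symm := by
    constructor
    rintro p q (h | ⟨e, h⟩)
    · exact Or.inl h.symm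
    · exact Or.inr ⟨e.symm, h.symm⟩
  loopless := by
    constructor
    rintro p (h | ⟨_, h⟩)
    · exact G.loopless.irrefl _ h
    · exact H.loopless.irrefl _ h

/-- Projection of `D ⊆ V(G) × V(H)` to `G`. -/
def projG {V W : Type*} (D : Set (V × W)) : Set V := {x | ∃ y, (x, y) ∈ D}

/-- Fiber of `D ⊆ V(G) × V(H)` over `x ∈ V(G)`. -/
def projH {V W : Type*} (D : Set (V × W)) (x : V) : Set W := {y | (x, y) ∈ D}

/-- The domination number. -/
noncomputable def domNum {V : Type*} [Fintype V] (G : SimpleGraph V) : ℕ :=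
  sInf {n | ∃ D : Finset V, IsDomSet G ↑D ∧ D.card = n}

section Aux
variable {V W : Type*} [Fintype W] {G : SimpleGraph V} {H : SimpleGraph W}

lemma domMono {S T : Set V} (h : S ⊆ T) (hS : IsDomSet G S) : IsDomSet G T := by
  intro v
  rcases hS v with hv | ⟨u, hu, ha⟩
  · exact Or.inl (h hv)
  · exact Or.inr ⟨u, h hu, ha⟩

lemma nonemptyW (hH : 2 ≤ domNum H) : Nonempty W := by
  by_contra h
  have hd : IsDomSet H (↑(∅ : Finset W)) := fun v => (h ⟨v⟩).elim
  have : domNum H ≤ 0 := Nat.sInf_le ⟨∅, hd, rfl⟩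
  omega

lemma not_small_dom (hH : 2 ≤ domNum H) {S : Set W} (hs : S.Subsingleton) :
    ¬ IsDomSet H S := by
  intro hd
  obtain ⟨w⟩ := nonemptyW hH
  rcases hs.eq_empty_or_singleton with he | ⟨y, he⟩
  · rcases hd w with hv | ⟨u, hu, _⟩ <;> rw [he] at * <;> simp_all
  · have hd1 : IsDomSet H (↑({y} : Finset W)) := by
      have he2 : (↑({y} : Finset W) : Set W) = S := by rw [he]; simp
      rw [he2]; exact hd
    have : domNum H ≤ 1 := Nat.sInf_le ⟨{y}, hd1, Finset.card_singleton y⟩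
    omega

lemma dom_nonempty (hH : 2 ≤ domNum H) {S : Set W} (hd : IsDomSet H S) : S.Nonempty := by
  by_contra h
  rw [Set.not_nonempty_iff_eq_empty] at h
  exact not_small_dom hH (by rw [h]; exact Set.subsingleton_empty) hd

lemma lex_dom_iff (D : Set (V × W)) :
    IsDomSet (lexProd G H) D ↔
      ∀ x, (∃ u ∈ projG D, G.Adj u x) ∨ IsDomSet H (projH D x) := by
  constructor
  · intro hd x
    by_cases ht : ∃ u ∈ projG D, G.Adj u x
    · exact Or.inl ht
    · refine Or.inr fun y => ?_
      have hxy : (x, y) ∈ D ∨ ∃ p ∈ D, (lexProd G H).Adj p (x, y) := hd (x, y)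
      rcases hxy with hm | ⟨⟨a, b⟩, hp, hadj⟩
      · exact Or.inl hm
      · rcases hadj with ha | ⟨he, ha⟩
        · exact absurd ⟨a, ⟨b, hp⟩, ha⟩ ht
        · subst he
          exact Or.inr ⟨b, hp, ha⟩
  · rintro h ⟨x, y⟩
    rcases h x with ⟨u, ⟨v, huv⟩, ha⟩ | hdom
    · exact Or.inr ⟨(u, v), huv, Or.inl ha⟩
    · rcases hdom y with hm | ⟨v, hv, ha⟩
      · exact Or.inl hm
      · exact Or.inr ⟨(x, v), hv, Or.inr ⟨rfl, ha⟩⟩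

end Aux

theorem stmt13 {V W : Type*} [Fintype W]
    (G : SimpleGraph V) (H : SimpleGraph W)
    (hH : 2 ≤ domNum H) (D : Set (V × W)) :
    IsMinDomSet (lexProd G H) D ↔
      IsIrredDomSet G (projG D) ∧
        ∀ x ∈ projG D,
          ((∃ u ∈ projG D, G.Adj u x) → ∃ y, projH D x = {y}) ∧
          (closedNbhd G x ∩ projG D = {x} → IsMinDomSet H (projH D x)) := by
  have hbd : ∀ (D : Set (V × W)) x, x ∈ projG D → ¬(∃ u ∈ projG D, G.Adj u x) →
      closedNbhd G x ∩ projG D = {x} := by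
    intro D x hx ht
    ext z
    simp only [Set.mem_inter_iff, Set.mem_singleton_iff]
    constructor
    · rintro ⟨hz1, hz2⟩
      rcases Set.mem_insert_iff.mp hz1 with h | h
      · exact h
      · exact absurd ⟨z, hz2, (G.mem_neighborSet x z).mp h |>.symm⟩ ht
    · rintro rfl
      exact ⟨Set.mem_insert _ _, hx⟩
  have hbd' : ∀ x, closedNbhd G x ∩ projG D = {x} →
      x ∈ projG D ∧ ¬(∃ u ∈ projG D, G.Adj u x) := by
    intro x hb
    have hx : x ∈ closedNbhd G x ∩ projG D := by rw [hb]; rfl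
    refine ⟨hx.2, ?_⟩
    rintro ⟨u, hu, ha⟩
    have hu2 : u ∈ closedNbhd G x ∩ projG D :=
      ⟨Set.mem_insert_iff.mpr (Or.inr ((G.mem_neighborSet x u).mpr ha.symm)), hu⟩
    rw [hb, Set.mem_singleton_iff] at hu2
    exact G.loopless.irrefl x (hu2 ▸ ha)
  constructor
  · rintro ⟨hd, hmin⟩
    have hdom := (lex_dom_iff D).mp hd
    have domA : IsDomSet G (projG D) := by
      intro x
      rcases hdom x with ⟨u, hu, ha⟩ | hx
      · exact Or.inr ⟨u, hu, ha⟩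
      · exact Or.inl (dom_nonempty hH hx)
    have hsing : ∀ x ∈ projG D, (∃ u ∈ projG D, G.Adj u x) → ∃ y, projH D x = {y} := by
      intro x hx ht
      obtain ⟨y₀, hy₀⟩ := hx
      refine ⟨y₀, Set.eq_singleton_iff_unique_mem.mpr ⟨hy₀, ?_⟩⟩
      intro y₁ hy₁
      by_contra hne
      set D' : Set (V × W) := D \ {(x, y₁)} with hD'
      have hss : D' ⊂ D := Set.sdiff_singleton_ssubset.mpr hy₁
      refine hmin D' hss ((lex_dom_iff D').mpr ?_)
      have hproj : projG D' = projG D := by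
        ext a
        constructor
        · rintro ⟨b, hb, -⟩; exact ⟨b, hb⟩
        · rintro ⟨b, hb⟩
          by_cases hab : (a, b) = (x, y₁)
          · obtain ⟨ha1, ha2⟩ := Prod.mk.injEq .. ▸ hab
            subst ha1
            refine ⟨y₀, hy₀, ?_⟩
            simp only [Set.mem_singleton_iff, Prod.mk.injEq]
            rintro ⟨-, h2⟩
            exact hne (h2 ▸ rfl)
          · exact ⟨b, hb, hab⟩
      intro a
      rcases hdom a with hta | hfa
      · exact Or.inl (hproj ▸ hta)
      · by_cases hax : a = x
        · subst hax; exact Or.inl (hproj ▸ ht)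
        · right
          have hfe : projH D' a = projH D a := by
            ext b
            simp only [projH, hD', Set.mem_setOf_eq, Set.mem_diff,
              Set.mem_singleton_iff, Prod.mk.injEq]
            exact ⟨fun h => h.1, fun h => ⟨h, fun he => absurd he.1 hax⟩⟩
          rw [hfe]; exact hfa
    refine ⟨⟨domA, ?_⟩, fun x hx => ⟨hsing x hx, ?_⟩⟩
    · rintro ⟨u, hu, hdu, hnb⟩
      set D' : Set (V × W) := {p ∈ D | p.1 ≠ u} with hD'
      obtain ⟨yu, hyu⟩ := hu
      have hss : D' ⊂ D := by
        rw [Set.ssubset_def]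
        refine ⟨Set.sep_subset _ _, fun hsub => ?_⟩
        have := (hsub hyu).2
        simp at this
      refine hmin D' hss ((lex_dom_iff D').mpr ?_)
      have hproj : projG D' = projG D \ {u} := by
        ext a
        simp only [projG, hD', Set.mem_setOf_eq, Set.mem_diff, Set.mem_singleton_iff]
        constructor
        · rintro ⟨b, hb, hne⟩; exact ⟨⟨b, hb⟩, hne⟩
        · rintro ⟨⟨b, hb⟩, hne⟩; exact ⟨b, hb, hne⟩
      intro a
      by_cases hau : a = u
      · subst hau
        rcases hdu a with ha | ⟨v, hv, hav⟩
        · exact absurd ha (by simp)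
        · exact Or.inl ⟨v, hproj ▸ hv, hav⟩
      · rcases hdom a with hta | hfa
        · have : a ∈ nbhd G (projG D \ {u}) := hnb ▸ hta
          exact Or.inl (hproj ▸ this)
        · right
          have hfe : projH D' a = projH D a := by
            ext b
            simp only [projH, hD', Set.mem_setOf_eq]
            exact ⟨fun h => h.1, fun h => ⟨h, hau⟩⟩
          rw [hfe]; exact hfa
    · intro hb
      obtain ⟨hxA, hnt⟩ := hbd' x hb
      have hfd : IsDomSet H (projH D x) := (hdom x).resolve_left hnt
      refine ⟨hfd, ?_⟩
      intro E hE hEd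
      obtain ⟨b₁, hb₁, hb₁'⟩ := Set.exists_of_ssubset hE
      have hEne : E.Nonempty := dom_nonempty hH hEd
      set D' : Set (V × W) := {p ∈ D | p.1 ≠ x ∨ p.2 ∈ E} with hD'
      have hss : D' ⊂ D := by
        rw [Set.ssubset_def]
        refine ⟨Set.sep_subset _ _, fun hsub => ?_⟩
        have := (hsub hb₁).2
        simp only [ne_eq, not_true_eq_false, false_or] at this
        exact hb₁' this
      refine hmin D' hss ((lex_dom_iff D').mpr ?_)
      have hproj : projG D' = projG D := by
        ext a
        constructor
        · rintro ⟨b, hb, -⟩; exact ⟨b, hb⟩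
        · rintro ⟨b, hb⟩
          by_cases hax : a = x
          · subst hax
            obtain ⟨e, he⟩ := hEne
            exact ⟨e, hE.1 he, Or.inr he⟩
          · exact ⟨b, hb, Or.inl hax⟩
      intro a
      rcases hdom a with hta | hfa
      · exact Or.inl (hproj ▸ hta)
      · by_cases hax : a = x
        · subst hax
          right
          have hfe : projH D' a = E := by
            ext b
            simp only [projH, hD', Set.mem_setOf_eq, ne_eq, not_true_eq_false, false_or]
            exact ⟨fun h => h.2, fun h => ⟨hE.1 h, h⟩⟩
          rw [hfe]; exact hEd
        · right
          have hfe : projH D' a = projH D a := by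
            ext b
            simp only [projH, hD', Set.mem_setOf_eq]
            exact ⟨fun h => h.1, fun h => ⟨h, Or.inl hax⟩⟩
          rw [hfe]; exact hfa
  · rintro ⟨⟨domA, hirr⟩, hcond⟩
    have hDdom : IsDomSet (lexProd G H) D := (lex_dom_iff D).mpr (fun x => by
      by_cases ht : ∃ u ∈ projG D, G.Adj u x
      · exact Or.inl ht
      · rcases domA x with hx | htd
        · exact Or.inr ((hcond x hx).2 (hbd D x hx ht)).1
        · exact absurd htd ht)
    refine ⟨hDdom, ?_⟩
    intro D' hss hD'
    obtain ⟨⟨x₀, y₀⟩, hpD, hpD'⟩ := Set.exists_of_ssubset hss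
    have hdom' := (lex_dom_iff D').mp hD'
    have hsub : projG D' ⊆ projG D := by rintro a ⟨b, hb⟩; exact ⟨b, hss.1 hb⟩
    have hfib : ∀ a, projH D' a ⊆ projH D a := fun a b hb => hss.1 hb
    have hAeq : projG D' = projG D := by
      refine Set.Subset.antisymm hsub ?_
      intro u hu
      by_contra hu'
      refine hirr ⟨u, hu, ?_, ?_⟩
      · have domA' : IsDomSet G (projG D') := fun z => by
          rcases hdom' z with ⟨v, hv, ha⟩ | hz
          · exact Or.inr ⟨v, hv, ha⟩
          · exact Or.inl (dom_nonempty hH hz)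
        exact domMono (fun a ha => ⟨hsub ha, fun he => hu' (he ▸ ha)⟩) domA'
      · refine Set.Subset.antisymm ?_ ?_
        · intro z hz
          obtain ⟨w, hw, haw⟩ := hz
          by_cases hwu : w = u
          · subst hwu
            by_contra hzn
            have hntd' : ¬∃ v ∈ projG D', G.Adj v z := by
              rintro ⟨v, hv, ha⟩
              exact hzn ⟨v, ⟨hsub hv, fun he => hu' (he ▸ hv)⟩, ha⟩
            have hz' : IsDomSet H (projH D' z) := (hdom' z).resolve_left hntd'
            have hzA : z ∈ projG D := hsub (dom_nonempty hH hz')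
            obtain ⟨y, hy⟩ := (hcond z hzA).1 ⟨w, hw, haw⟩
            refine not_small_dom hH (fun a ha b hb => ?_) hz'
            have ha' : a ∈ ({y} : Set W) := hy ▸ hfib z ha
            have hb' : b ∈ ({y} : Set W) := hy ▸ hfib z hb
            rw [Set.mem_singleton_iff] at ha' hb'
            rw [ha', hb']
          · exact ⟨w, ⟨hw, hwu⟩, haw⟩
        · rintro z ⟨w, hw, haw⟩
          exact ⟨w, hw.1, haw⟩
    have hx₀A : x₀ ∈ projG D := ⟨y₀, hpD⟩
    by_cases ht : ∃ u ∈ projG D, G.Adj u x₀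
    · obtain ⟨y, hy⟩ := (hcond x₀ hx₀A).1 ht
      have hx₀A' : x₀ ∈ projG D' := hAeq ▸ hx₀A
      obtain ⟨b, hb⟩ := hx₀A'
      have hb' : b ∈ ({y} : Set W) := hy ▸ hfib x₀ hb
      have hy₀' : y₀ ∈ ({y} : Set W) := hy ▸ (hpD : y₀ ∈ projH D x₀)
      rw [Set.mem_singleton_iff] at hb' hy₀'
      refine hpD' ?_
      rw [show y₀ = b from hy₀'.trans hb'.symm]
      exact hb
    · have hminH := ((hcond x₀ hx₀A).2 (hbd D x₀ hx₀A ht)).2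
      have hnt' : ¬∃ u ∈ projG D', G.Adj u x₀ := by rw [hAeq]; exact ht
      have hfd : IsDomSet H (projH D' x₀) := (hdom' x₀).resolve_left hnt'
      exact hminH (projH D' x₀)
        ((Set.ssubset_iff_of_subset (hfib x₀)).mpr ⟨y₀, hpD, hpD'⟩) hfd
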